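/- Let L : ℝ^d → ℝ be convex and differentiable, let G : ℝ^s → ℝ^d be differentiable and ν_G-strongly smooth, let ρ > 0, and let (w*, z*) satisfy w* = G(z*). Define the smooth augmented Lagrangian L'_ρ(w, z, λ) := L(w) + ⟨w − G(z), λ⟩ + (ρ/2)‖w − G(z)‖², with joint gradient in (w, z) given by ∇_w L'_ρ = ∇L(w) + λ + ρ(w − G(z)) and ∇_z L'_ρ = −DG(z)ᵀ(λ + ρ(w − G(z))). Then for every (w, z) with ‖w − G(z)‖ ≤ a and every λ with ‖λ‖ ≤ λ_max: L'_ρ(w*, z*, λ) − L'_ρ(w, z, λ) − ⟨w* − w, ∇_w L'_ρ(w, z, λ)⟩ − ⟨z* − z, ∇_z L'_ρ(w, z, λ)⟩ ≥ −(ν_G(λ_max + ρ·a)/2)‖z* − z‖². (Inequality (2) of the restricted strong convexity lemma; note L'_ρ(w*, z*, λ) = L(w*) since w* = G(z*).) -/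

import Mathlib

open scoped RealInnerProductSpace

lemma convex_gradient_ineq {d : ℕ} (L : EuclideanSpace ℝ (Fin d) → ℝ)
    (hconv : ConvexOn ℝ Set.univ L)
    (gradL : EuclideanSpace ℝ (Fin d) → EuclideanSpace ℝ (Fin d))
    (hL : ∀ w, HasGradientAt L (gradL w) w)
    (x y : EuclideanSpace ℝ (Fin d)) :
    ⟪gradL x, y - x⟫ ≤ L y - L x := by
  set g : ℝ → ℝ := fun t => L (x + t • (y - x)) with hg
  have gconv : ConvexOn ℝ Set.univ g := by
    have := hconv.comp_affineMap (AffineMap.lineMap x y :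
      ℝ →ᵃ[ℝ] EuclideanSpace ℝ (Fin d))
    have heq : (L ∘ (AffineMap.lineMap x y :
        ℝ →ᵃ[ℝ] EuclideanSpace ℝ (Fin d))) = g := by
      funext t
      simp only [Function.comp_apply, AffineMap.lineMap_apply, g, vadd_eq_add]
      rw [add_comm]; rfl
    rw [heq] at this
    simpa using this
  have hderiv : HasDerivAt g ⟪gradL x, y - x⟫ 0 := by
    have h1 : HasDerivAt (fun t : ℝ => x + t • (y - x)) (y - x) 0 := by
      simpa using ((hasDerivAt_id (0 : ℝ)).smul_const (y - x)).const_add x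
    have hfd : HasFDerivAt L ((InnerProductSpace.toDual ℝ _) (gradL (x + (0:ℝ) • (y - x))))
        (x + (0:ℝ) • (y - x)) := hasGradientAt_iff_hasFDerivAt.mp (hL _)
    have := hfd.comp_hasDerivAt 0 h1
    simpa [g, InnerProductSpace.toDual_apply_apply, Function.comp_def] using this
  have := gconv.le_slope_of_hasDerivAt (Set.mem_univ (0:ℝ)) (Set.mem_univ (1:ℝ))
    zero_lt_one hderiv
  simpa [slope_def_field, g] using this

/-- inequality (2) of the restricted strong convexity lemma.
For convex differentiable `L`, `ν_G`-strongly smooth `G`, and a feasible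
`(w*, z*)` (i.e. `w* = G z*`), the smooth augmented Lagrangian
`L'_ρ(w, z, λ) := L w + ⟪w − G z, λ⟫ + (ρ/2)‖w − G z‖²` satisfies the lower
curvature bound with constant `−ν_G(λ_max + ρ·a)/2` in the `z` direction. -/
theorem augmented_lagrangian_weak_convexity_bound {s d : ℕ}
    (L : EuclideanSpace ℝ (Fin d) → ℝ)
    (hconv : ConvexOn ℝ Set.univ L)
    (gradL : EuclideanSpace ℝ (Fin d) → EuclideanSpace ℝ (Fin d))
    (hL : ∀ w, HasGradientAt L (gradL w) w)
    (G : EuclideanSpace ℝ (Fin s) → EuclideanSpace ℝ (Fin d))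
    (DG : EuclideanSpace ℝ (Fin s) →
      EuclideanSpace ℝ (Fin s) →L[ℝ] EuclideanSpace ℝ (Fin d))
    (hG : ∀ z, HasFDerivAt G (DG z) z)
    (νG : ℝ)
    (hsmooth : ∀ z z' : EuclideanSpace ℝ (Fin s),
      ‖G z' - G z - DG z (z' - z)‖ ≤ νG / 2 * ‖z' - z‖ ^ 2)
    (ρ : ℝ) (hρ : 0 < ρ)
    (wstar : EuclideanSpace ℝ (Fin d)) (zstar : EuclideanSpace ℝ (Fin s))
    (hfeas : wstar = G zstar)
    (lamMax a : ℝ) :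
    ∀ (w : EuclideanSpace ℝ (Fin d)) (z : EuclideanSpace ℝ (Fin s))
      (lam : EuclideanSpace ℝ (Fin d)),
      ‖w - G z‖ ≤ a → ‖lam‖ ≤ lamMax →
      (L wstar + ⟪wstar - G zstar, lam⟫ + ρ / 2 * ‖wstar - G zstar‖ ^ 2)
        - (L w + ⟪w - G z, lam⟫ + ρ / 2 * ‖w - G z‖ ^ 2)
        - ⟪wstar - w, gradL w + lam + ρ • (w - G z)⟫
        - ⟪zstar - z, -((DG z).adjoint (lam + ρ • (w - G z)))⟫
      ≥ -(νG * (lamMax + ρ * a) / 2) * ‖zstar - z‖ ^ 2 := by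
  intro w z lam hra hlam
  set r : EuclideanSpace ℝ (Fin d) := w - G z with hr
  set v : EuclideanSpace ℝ (Fin d) := lam + ρ • r with hv
  set e : EuclideanSpace ℝ (Fin d) := G zstar - G z - DG z (zstar - z) with he
  -- adjoint
  have hadj : ⟪zstar - z, -((DG z).adjoint v)⟫ = -⟪DG z (zstar - z), v⟫ := by
    rw [inner_neg_right, ContinuousLinearMap.adjoint_inner_right]
  -- w* - w = e + DG z (zstar - z) - r
  have hdecomp : wstar - w = e + DG z (zstar - z) - r := by
    rw [hfeas, he, hr]; abel
  -- key identity
  have hid : (L wstar + ⟪wstar - G zstar, lam⟫ + ρ / 2 * ‖wstar - G zstar‖ ^ 2)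
        - (L w + ⟪w - G z, lam⟫ + ρ / 2 * ‖w - G z‖ ^ 2)
        - ⟪wstar - w, gradL w + lam + ρ • (w - G z)⟫
        - ⟪zstar - z, -((DG z).adjoint (lam + ρ • (w - G z)))⟫
      = (L wstar - L w - ⟪gradL w, wstar - w⟫) - ⟪e, v⟫ + ρ / 2 * ‖r‖ ^ 2 := by
    rw [← hr, ← hv, hadj, hfeas]
    have hws : G zstar - w = e + DG z (zstar - z) - r := by rw [← hfeas]; exact hdecomp
    rw [hws]
    simp only [inner_sub_left, inner_add_left, inner_add_right, inner_smul_right,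
      sub_self, inner_zero_left, real_inner_comm r (gradL w), hv,
      real_inner_self_eq_norm_sq]
    have h1 : ⟪gradL w, e + DG z (zstar - z) - r⟫
        = ⟪gradL w, e⟫ + ⟪gradL w, DG z (zstar - z)⟫ - ⟪gradL w, r⟫ := by
      simp [inner_sub_right, inner_add_right]
    have h2 : ∀ x : EuclideanSpace ℝ (Fin d),
        ⟪x, lam + ρ • r⟫ = ⟪x, lam⟫ + ρ * ⟪x, r⟫ := fun x => by
      simp [inner_add_right, inner_smul_right]
    have h3 : ⟪e + DG z (zstar - z) - r, gradL w⟫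
        = ⟪gradL w, e⟫ + ⟪gradL w, DG z (zstar - z)⟫ - ⟪gradL w, r⟫ := by
      rw [real_inner_comm]; exact h1
    rw [h1, real_inner_comm e (gradL w), real_inner_comm (DG z (zstar - z)) (gradL w),
      real_inner_comm r (gradL w)]
    simp only [norm_zero]
    ring
  rw [hid, ge_iff_le]
  have hA : 0 ≤ L wstar - L w - ⟪gradL w, wstar - w⟫ := by
    have := convex_gradient_ineq L hconv gradL hL w wstar
    linarith
  have hbound : ⟪e, v⟫ ≤ νG * (lamMax + ρ * a) / 2 * ‖zstar - z‖ ^ 2 := by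
    have h1 : ⟪e, v⟫ ≤ ‖e‖ * ‖v‖ := real_inner_le_norm e v
    have he' : ‖e‖ ≤ νG / 2 * ‖zstar - z‖ ^ 2 := hsmooth z zstar
    have hvn : ‖v‖ ≤ lamMax + ρ * a := by
      calc ‖v‖ ≤ ‖lam‖ + ‖ρ • r‖ := norm_add_le _ _
        _ ≤ lamMax + ρ * a := by
            rw [norm_smul, Real.norm_eq_abs, abs_of_pos hρ]
            have := mul_le_mul_of_nonneg_left hra hρ.le
            linarith
    have hev : ‖e‖ * ‖v‖ ≤ (νG / 2 * ‖zstar - z‖ ^ 2) * (lamMax + ρ * a) := by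
      apply mul_le_mul he' hvn (norm_nonneg _)
      exact le_trans (norm_nonneg e) he'
    calc ⟪e, v⟫ ≤ ‖e‖ * ‖v‖ := h1
      _ ≤ (νG / 2 * ‖zstar - z‖ ^ 2) * (lamMax + ρ * a) := hev
      _ = νG * (lamMax + ρ * a) / 2 * ‖zstar - z‖ ^ 2 := by ring
  have hr2 : 0 ≤ ρ / 2 * ‖r‖ ^ 2 := by positivity
  nlinarith [hbound, hA, hr2]
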